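/- The class Wide of all widened inclusions is contained in the saturated closure of the class Wide^(1) of inclusions widened at a single vertex. -/

import Mathlib

open CategoryTheory Simplicial Opposite Limits

namespace Paper

/-! ## The simplicial set `J`, nerve of the free-living isomorphism -/

/-- The simplicial set `J`, the nerve of the free-living isomorphism `𝕀`:
its `n`-simplices are the tuples `{0,1}^(n+1)` (recorded as `Bool`-valued functions,
`false` being the vertex `0` and `true` the vertex `1`), with all simplicial
operators acting by reindexing. -/
def J : SSet.{0} where
  obj m := Fin (m.unop.len + 1) → Bool
  map f := TypeCat.ofHom fun a => a ∘ f.unop.toOrderHom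
  map_id _ := rfl
  map_comp _ _ := rfl

/-- The two vertices `0, 1 : Δ[0] ⟶ J` of `J`; `ptJ false` is the vertex `0` and
`ptJ true` is the vertex `1`. -/
def ptJ (b : Bool) : Δ[0] ⟶ J where
  app _ := TypeCat.ofHom fun _ => fun _ => b
  naturality _ _ _ := rfl

/-- The boundary `∂J = {0} ∪ {1}` of `J` (two discrete points). -/
def bJ : SSet.{0} where
  obj _ := Bool
  map _ := TypeCat.ofHom fun b => b
  map_id _ := rfl
  map_comp _ _ := rfl

/-- The inclusion `∂J ↪ J`. -/
def bJIncl : bJ ⟶ J where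
  app _ := TypeCat.ofHom fun b => fun _ => b
  naturality _ _ _ := rfl

/-! ## Binary products and pushout-products -/

/-- The (pointwise) product of two simplicial sets. -/
def sprod (X Y : SSet.{0}) : SSet.{0} where
  obj m := X.obj m × Y.obj m
  map f := TypeCat.ofHom fun p => (X.map f p.1, Y.map f p.2)
  map_id m := by
    ext p
    · exact FunctorToTypes.map_id_apply X p.1
    · exact FunctorToTypes.map_id_apply Y p.2
  map_comp f g := by
    ext p
    · exact FunctorToTypes.map_comp_apply X f g p.1
    · exact FunctorToTypes.map_comp_apply Y f g p.2

/-- The product of two morphisms of simplicial sets. -/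
def sprodMap {X X' Y Y' : SSet.{0}} (f : X ⟶ X') (g : Y ⟶ Y') : sprod X Y ⟶ sprod X' Y' where
  app m := TypeCat.ofHom fun p => (f.app m (Prod.fst p), g.app m (Prod.snd p))
  naturality m m' φ := by
    ext p
    have h1 := ConcreteCategory.congr_hom (f.naturality φ) (Prod.fst (p : X.obj m × Y.obj m))
    have h2 := ConcreteCategory.congr_hom (g.naturality φ) (Prod.snd (p : X.obj m × Y.obj m))
    exact Prod.ext h1 h2

/-- The pushout-product `f □ g : (A × Z) ∪ (B × W) ⟶ B × Z` of `f : A ⟶ B` and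
`g : W ⟶ Z`, the domain being presented as the pushout `(A × Z) ∪_{A × W} (B × W)`. -/
noncomputable def pp {A B W Z : SSet.{0}} (f : A ⟶ B) (g : W ⟶ Z) :
    pushout (sprodMap (𝟙 A) g) (sprodMap f (𝟙 W)) ⟶ sprod B Z :=
  pushout.desc (sprodMap f (𝟙 Z)) (sprodMap (𝟙 B) g) rfl

/-! ## Saturated classes of morphisms -/

/-- A class of morphisms is stable under retracts if, whenever `f` is a retract of `g`
in the arrow category, membership of `g` implies membership of `f`. -/
def StableUnderRetracts (T : MorphismProperty SSet.{0}) : Prop :=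
  ∀ ⦃X Y X' Y' : SSet.{0}⦄ (f : X ⟶ Y) (g : X' ⟶ Y')
    (i : Arrow.mk f ⟶ Arrow.mk g) (r : Arrow.mk g ⟶ Arrow.mk f),
    i ≫ r = 𝟙 _ → T g → T f

/-- The inclusion functor `Set.Iio i ⥤ ι`. -/
def iioFunctor {ι : Type} [Preorder ι] (i : ι) : Set.Iio i ⥤ ι :=
  Monotone.functor (f := Subtype.val) (fun _ _ h => h)

/-- The cocone on the restriction of `F : ι ⥤ SSet` to `Set.Iio i` with apex `F.obj i`. -/
def restrictionCocone {ι : Type} [Preorder ι] (F : ι ⥤ SSet.{0}) (i : ι) :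
    Cocone (iioFunctor i ⋙ F) where
  pt := F.obj i
  ι :=
    { app := fun j => F.map (homOfLE j.2.le)
      naturality := fun j k h => by
        dsimp [iioFunctor]
        rw [← F.map_comp, Category.comp_id]
        congr 1 }

/-- A class of morphisms is stable under transfinite composition if, for every
well-ordered type `ι` and every functor `F : ι ⥤ SSet` which is continuous at limit
stages and whose successor maps `F.obj i ⟶ F.obj (i+1)` all belong to the class, and
every colimit cocone `c` on `F`, the transfinite composite `F.obj ⊥ ⟶ c.pt` belongs to
the class. -/
def StableUnderTransfiniteComposition (T : MorphismProperty SSet.{0}) : Prop :=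
  ∀ (ι : Type) [LinearOrder ι] [SuccOrder ι] [OrderBot ι] [WellFoundedLT ι]
    (F : ι ⥤ SSet.{0}),
    (∀ i : ι, ¬IsMax i → T (F.map (homOfLE (Order.le_succ i)))) →
    (∀ i : ι, Order.IsSuccLimit i → Nonempty (IsColimit (restrictionCocone F i))) →
    ∀ (c : Cocone F), IsColimit c → T (c.ι.app ⊥)

/-- A class of morphisms of simplicial sets is saturated if it is closed under
isomorphisms, pushouts, transfinite compositions, and retracts. -/
structure IsSaturated (T : MorphismProperty SSet.{0}) : Prop where
  respectsIso : T.RespectsIso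
  stableUnderCobaseChange : T.IsStableUnderCobaseChange
  stableUnderRetracts : StableUnderRetracts T
  stableUnderTransfiniteComposition : StableUnderTransfiniteComposition T

/-- The saturated closure of a class of morphisms: the smallest saturated class
containing it. -/
def satClosure (S : MorphismProperty SSet.{0}) : MorphismProperty SSet.{0} :=
  fun _ _ f => ∀ T : MorphismProperty SSet.{0}, IsSaturated T → S ≤ T → T f

/-! ## Subcomplexes -/

/-- A subcomplex of a simplicial set. -/
structure Sub (X : SSet.{0}) where
  carrier : ∀ m, Set (X.obj m)
  map_mem : ∀ ⦃m m' : SimplexCategoryᵒᵖ⦄ (f : m ⟶ m') ⦃σ : X.obj m⦄,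
    σ ∈ carrier m → X.map f σ ∈ carrier m'

/-- The simplicial set underlying a subcomplex. -/
def Sub.toSSet {X : SSet.{0}} (S : Sub X) : SSet.{0} where
  obj m := S.carrier m
  map f := TypeCat.ofHom fun σ => ⟨X.map f σ.1, S.map_mem f σ.2⟩
  map_id m := by
    ext σ
    exact FunctorToTypes.map_id_apply X σ.1
  map_comp f g := by
    ext σ
    exact FunctorToTypes.map_comp_apply X f g σ.1

/-- The inclusion of a subcomplex. -/
def Sub.ι {X : SSet.{0}} (S : Sub X) : S.toSSet ⟶ X where
  app _ := TypeCat.ofHom fun σ => Subtype.val σ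
  naturality _ _ _ := rfl

/-- Containment of subcomplexes. -/
def Sub.Le {X : SSet.{0}} (S T : Sub X) : Prop := ∀ m, S.carrier m ⊆ T.carrier m

/-- The inclusion map associated to a containment of subcomplexes. -/
def Sub.homOfLe {X : SSet.{0}} {S T : Sub X} (h : S.Le T) : S.toSSet ⟶ T.toSSet where
  app m := TypeCat.ofHom fun σ => Subtype.mk (Subtype.val σ) (h m (Subtype.property σ))
  naturality _ _ _ := rfl

/-- The union of two subcomplexes. -/
def Sub.union {X : SSet.{0}} (S T : Sub X) : Sub X where
  carrier m := S.carrier m ∪ T.carrier m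
  map_mem _ _ f _ h := h.imp (fun hs => S.map_mem f hs) (fun ht => T.map_mem f ht)

/-- The intersection of two subcomplexes. -/
def Sub.inter {X : SSet.{0}} (S T : Sub X) : Sub X where
  carrier m := S.carrier m ∩ T.carrier m
  map_mem _ _ f _ h := ⟨S.map_mem f h.1, T.map_mem f h.2⟩

/-- A subcomplex `S` of `X`, viewed as a subcomplex of (the simplicial set underlying)
another subcomplex `T` of `X`. -/
def Sub.restrict {X : SSet.{0}} (T S : Sub X) : Sub T.toSSet where
  carrier m := {σ | Subtype.val σ ∈ S.carrier m}
  map_mem _ _ f _ h := S.map_mem f h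

/-- The (dimension zero) object of `SimplexCategoryᵒᵖ` indexing vertices. -/
abbrev V0 : SimplexCategoryᵒᵖ := Opposite.op (SimplexCategory.mk 0)

/-- The full subcomplex of `X` on a set `ν` of vertices: the simplices all of whose
vertices lie in `ν`. -/
def fullSub (X : SSet.{0}) (ν : Set (X.obj V0)) : Sub X where
  carrier m := {σ | ∀ g : SimplexCategory.mk 0 ⟶ m.unop, X.map g.op σ ∈ ν}
  map_mem := by
    intro m m' f σ hσ g
    rw [← FunctorToTypes.map_comp_apply]
    exact hσ (g ≫ f.unop)

/-! ## Widenings and widened inclusions -/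

/-- The widening `W_ν(X)` of `X` at a set `ν` of vertices: the full subcomplex of
`J × X` on the vertex set `({0} × X₀) ∪ ({1} × ν)`. -/
def wideSub (X : SSet.{0}) (ν : Set (X.obj V0)) : Sub (sprod J X) :=
  fullSub (sprod J X) {p | (Prod.fst p) 0 = true → Prod.snd p ∈ ν}

/-- The subcomplex `{0} × X` of `J × X` (the full subcomplex on the vertices
`{0} × X₀`). -/
def zeroSlice (X : SSet.{0}) : Sub (sprod J X) :=
  fullSub (sprod J X) {p | (Prod.fst p) 0 = false}

/-- For `A` a subcomplex of `Y`, the subcomplex `J × A` of `J × Y`. -/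
def Sub.prodJ {Y : SSet.{0}} (A : Sub Y) : Sub (sprod J Y) where
  carrier m := {p | Prod.snd p ∈ A.carrier m}
  map_mem _ _ f _ h := A.map_mem f h

/-- Given a subcomplex (inclusion) `A = X ⊆ Y` and a set `ν` of vertices of `Y`, the
subcomplex `({0} × Y) ∪ W_{ν ∩ X₀}(X)` of `J × Y`: the domain of the inclusion
`X ↪ Y` widened at `ν`. -/
def widenedSub (Y : SSet.{0}) (A : Sub Y) (ν : Set (Y.obj V0)) : Sub (sprod J Y) :=
  (zeroSlice Y).union ((wideSub Y (ν ∩ A.carrier V0)).inter A.prodJ)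

lemma zeroSlice_le_wideSub (Y : SSet.{0}) (ν : Set (Y.obj V0)) :
    (zeroSlice Y).Le (wideSub Y ν) := by
  intro m σ hσ g h
  exact absurd (hσ g) (by simp [h])

lemma wideSub_mono (Y : SSet.{0}) {ν ν' : Set (Y.obj V0)} (h : ν ⊆ ν') :
    (wideSub Y ν).Le (wideSub Y ν') :=
  fun _ σ hσ g ht => h (hσ g ht)

lemma widenedSub_le (Y : SSet.{0}) (A : Sub Y) (ν : Set (Y.obj V0)) :
    (widenedSub Y A ν).Le (wideSub Y ν) := by
  refine fun m σ hσ => Or.elim hσ (fun h => ?_) (fun h => ?_)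
  · exact zeroSlice_le_wideSub Y ν m h
  · exact wideSub_mono Y Set.inter_subset_left m h.1

/-- The inclusion `X ↪ Y` widened at `ν`: the inclusion
`({0} × Y) ∪ W_{ν ∩ X₀}(X) ↪ W_ν(Y)`. -/
def widenedIncl (Y : SSet.{0}) (A : Sub Y) (ν : Set (Y.obj V0)) :
    (widenedSub Y A ν).toSSet ⟶ (wideSub Y ν).toSSet :=
  Sub.homOfLe (widenedSub_le Y A ν)

/-- `Wide`: the class of all widened inclusions. -/
def Wide : MorphismProperty SSet.{0} := fun _ _ h =>
  ∃ (Y : SSet.{0}) (A : Sub Y) (ν : Set (Y.obj V0)),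
    Arrow.mk h = Arrow.mk (widenedIncl Y A ν)

/-- `Wide^(1)`: the class of inclusions widened at a single vertex. -/
def Wide1 : MorphismProperty SSet.{0} := fun _ _ h =>
  ∃ (Y : SSet.{0}) (A : Sub Y) (v : Y.obj V0),
    Arrow.mk h = Arrow.mk (widenedIncl Y A {v})

/-! ## Narrow vertices -/

/-- A vertex `v` of `Y` is narrow if every simplex of `Y` has at most one vertex equal
to `v`. -/
def Narrow (Y : SSet.{0}) (v : Y.obj V0) : Prop :=
  ∀ ⦃m : SimplexCategoryᵒᵖ⦄ (σ : Y.obj m) (g g' : SimplexCategory.mk 0 ⟶ m.unop),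
    Y.map g.op σ = v → Y.map g'.op σ = v → g = g'

/-- `Wide_nar`: the class of inclusions widened at a narrow set of vertices. -/
def WideNar : MorphismProperty SSet.{0} := fun _ _ h =>
  ∃ (Y : SSet.{0}) (A : Sub Y) (ν : Set (Y.obj V0)),
    (∀ v ∈ ν, Narrow Y v) ∧ Arrow.mk h = Arrow.mk (widenedIncl Y A ν)

/-- `Wide_nar^(1)`: the class of inclusions widened at a single narrow vertex. -/
def WideNar1 : MorphismProperty SSet.{0} := fun _ _ h =>
  ∃ (Y : SSet.{0}) (A : Sub Y) (v : Y.obj V0),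
    Narrow Y v ∧ Arrow.mk h = Arrow.mk (widenedIncl Y A {v})

/-! ## Standard simplices, boundaries, skeleta, iso-horns -/

/-- The unique map to the terminal simplicial set `Δ[0]`. -/
def toPt (X : SSet.{0}) : X ⟶ Δ[0] where
  app m := TypeCat.ofHom fun _ => SSet.stdSimplex.const 0 0 m
  naturality m m' f := by
    ext x
    apply SSet.stdSimplex.objEquiv.injective
    apply SimplexCategory.Hom.ext
    apply OrderHom.ext
    funext j
    exact Subsingleton.elim (α := Fin 1) _ _

/-- The `i`-th vertex of the standard simplex `Δ[n]`. -/
def vrt (n : ℕ) (i : Fin (n + 1)) : Δ[n].obj V0 :=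
  SSet.stdSimplex.const n i V0

/-- The boundary `∂Δ[n]`, as a subcomplex of `Δ[n]`: the simplices which are not
surjective as monotone maps. -/
def bSub (n : ℕ) : Sub Δ[n] where
  carrier m := {σ | ¬Function.Surjective (SSet.stdSimplex.asOrderHom σ)}
  map_mem _ _ f σ hσ h := hσ (Function.Surjective.of_comp h)

/-- The `k`-skeleton of `Y`, as a subcomplex: the simplices which factor through some
simplex of dimension at most `k`. -/
def skSub (Y : SSet.{0}) (k : ℕ) : Sub Y where
  carrier m := {σ | ∃ (j : ℕ) (_ : j ≤ k) (f : m.unop ⟶ SimplexCategory.mk j)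
    (τ : Y.obj (Opposite.op (SimplexCategory.mk j))), Y.map f.op τ = σ}
  map_mem := by
    rintro m m' φ σ ⟨j, hj, f, τ, rfl⟩
    exact ⟨j, hj, φ.unop ≫ f, τ, by rw [← FunctorToTypes.map_comp_apply]; rfl⟩

/-- A `k`-simplex is nondegenerate if it admits no factorization through a simplex of
strictly smaller dimension. -/
def Nondegenerate (Y : SSet.{0}) {k : ℕ} (σ : Y.obj (Opposite.op (SimplexCategory.mk k))) :
    Prop :=
  ∀ (j : ℕ) (f : SimplexCategory.mk k ⟶ SimplexCategory.mk j)
    (τ : Y.obj (Opposite.op (SimplexCategory.mk j))), Y.map f.op τ = σ → k ≤ j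

/-- The iso-horn inclusion `𝕍_i[m+1] ↪ ∇̄_i[m+1]`: the boundary inclusion
`∂Δ[m] ↪ Δ[m]` widened at the single vertex `i`, i.e. the inclusion
`({0} × Δ[m]) ∪ W_i(∂Δ[m]) ↪ W_i(Δ[m])` of the iso-horn into the isoplex. -/
def isoHornIncl (m : ℕ) (i : Fin (m + 1)) :
    (widenedSub Δ[m] (bSub m) {vrt m i}).toSSet ⟶ (wideSub Δ[m] {vrt m i}).toSSet :=
  widenedIncl Δ[m] (bSub m) {vrt m i}

/-- `IsoHorn`: the class of all iso-horn inclusions. -/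
def IsoHorn : MorphismProperty SSet.{0} := fun _ _ h =>
  ∃ (m : ℕ) (i : Fin (m + 1)), Arrow.mk h = Arrow.mk (isoHornIncl m i)

/-! ## The classes `({0} ↪ J) □ Bdry` and `({0} ↪ J) □ Mono` -/

/-- The class `({0} ↪ J) □ Bdry` of pushout-products of the vertex `0 : Δ[0] ⟶ J`
with the boundary inclusions `∂Δ[n] ↪ Δ[n]`. -/
def ppJ0Bdry : MorphismProperty SSet.{0} := fun _ _ h =>
  ∃ n : ℕ, Arrow.mk h = Arrow.mk (pp (ptJ false) (SSet.boundary n).ι)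

/-- The class `({0} ↪ J) □ Mono` of pushout-products of the vertex `0 : Δ[0] ⟶ J`
with all monomorphisms of simplicial sets. -/
def ppJ0Mono : MorphismProperty SSet.{0} := fun _ _ h =>
  ∃ (W Z : SSet.{0}) (g : W ⟶ Z), Mono g ∧ Arrow.mk h = Arrow.mk (pp (ptJ false) g)


/-! ## Auxiliary material for Statement 10 -/

section AuxBasic

lemma Sub.Le.refl {X : SSet.{0}} (S : Sub X) : S.Le S := fun _ _ h => h

lemma Sub.Le.trans {X : SSet.{0}} {S T U : Sub X} (h : S.Le T) (h' : T.Le U) : S.Le U :=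
  fun m _ hx => h' m (h m hx)

/-- Mutually contained subcomplexes have isomorphic underlying simplicial sets. -/
@[simps]
def Sub.isoOfLe {X : SSet.{0}} {S T : Sub X} (h : S.Le T) (h' : T.Le S) :
    S.toSSet ≅ T.toSSet where
  hom := Sub.homOfLe h
  inv := Sub.homOfLe h'
  hom_inv_id := rfl
  inv_hom_id := rfl

noncomputable instance : SuccOrder PUnit where
  succ _ := PUnit.unit
  le_succ _ := le_refl _
  max_of_succ_le {a} _ := fun b _ => le_refl _ |>.trans (by cases a; cases b; exact le_refl _)
  succ_le_of_lt {a b} h := (lt_irrefl a (by cases a; cases b; exact h)).elim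

instance : WellFoundedLT PUnit :=
  ⟨⟨fun a => ⟨a, fun b hb => (lt_irrefl b (by cases a; cases b; exact hb)).elim⟩⟩⟩

/-- Every saturated class contains all identities (trivial transfinite composition). -/
lemma IsSaturated.id_mem {T : MorphismProperty SSet.{0}} (hT : IsSaturated T)
    (X : SSet.{0}) : T (𝟙 X) := by
  have hmax : ∀ i : PUnit, IsMax i := fun i b _ => le_refl _ |>.trans (by cases i; cases b; exact le_refl _)
  have hc : IsColimit (⟨X, { app := fun _ => 𝟙 X, naturality := by intros; rfl }⟩ :
      Cocone ((Functor.const PUnit).obj X)) :=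
    { desc := fun s => s.ι.app ⊥
      fac := fun s j => by
        have : j = ⊥ := Subsingleton.elim _ _
        subst this; simp
      uniq := fun s q hq => by simpa using hq ⊥ }
  have := hT.stableUnderTransfiniteComposition PUnit ((Functor.const PUnit).obj X)
    (fun i hi => absurd (hmax i) hi)
    (fun i hi => absurd (hmax i).isTop.isMax (by
      exact fun h => hi.not_isMin (fun b hb => le_refl _ |>.trans (by cases i; cases b; exact le_refl _))))
    _ hc
  exact this

/-- Every saturated class contains all isomorphisms. -/
lemma IsSaturated.iso_mem {T : MorphismProperty SSet.{0}} (hT : IsSaturated T)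
    {X Y : SSet.{0}} (e : X ≅ Y) : T e.hom := by
  have h1 : T (𝟙 Y) := hT.id_mem Y
  have := hT.respectsIso.toRespectsLeft.precomp (Q := MorphismProperty.isomorphisms SSet.{0})
    e.hom (inferInstanceAs (IsIso e.hom)) (𝟙 Y) h1
  simpa using this

end AuxBasic
section AuxMem

/-- Membership in a widening, in terms of arbitrary vertex maps. -/
lemma mem_wideSub_iff (X : SSet.{0}) (s : Set (X.obj V0)) {m : SimplexCategoryᵒᵖ}
    {σ : (sprod J X).obj m} :
    σ ∈ (wideSub X s).carrier m ↔
      ∀ g : SimplexCategory.mk 0 ⟶ m.unop, σ.1 (g.toOrderHom 0) = true →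
        X.map g.op σ.2 ∈ s :=
  Iff.rfl

/-- Membership in a widening, in terms of vertices. -/
lemma mem_wideSub_iff_const (X : SSet.{0}) (s : Set (X.obj V0)) {m : SimplexCategoryᵒᵖ}
    {σ : (sprod J X).obj m} :
    σ ∈ (wideSub X s).carrier m ↔
      ∀ k : Fin (m.unop.len + 1), σ.1 k = true →
        X.map (SimplexCategory.const (SimplexCategory.mk 0) m.unop k).op σ.2 ∈ s := by
  constructor
  · intro h k hk
    exact h (SimplexCategory.const (SimplexCategory.mk 0) m.unop k) hk
  · intro h g hg
    rw [SimplexCategory.eq_const_of_zero g]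
    exact h (g.toOrderHom 0) hg

lemma mem_zeroSlice_iff (X : SSet.{0}) {m : SimplexCategoryᵒᵖ} {σ : (sprod J X).obj m} :
    σ ∈ (zeroSlice X).carrier m ↔
      ∀ g : SimplexCategory.mk 0 ⟶ m.unop, σ.1 (g.toOrderHom 0) = false :=
  Iff.rfl

lemma mem_zeroSlice_iff_const (X : SSet.{0}) {m : SimplexCategoryᵒᵖ} {σ : (sprod J X).obj m} :
    σ ∈ (zeroSlice X).carrier m ↔ ∀ k : Fin (m.unop.len + 1), σ.1 k = false := by
  constructor
  · intro h k
    exact h (SimplexCategory.const (SimplexCategory.mk 0) m.unop k)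
  · intro h g
    exact h (g.toOrderHom 0)

end AuxMem
section Statement10

variable (Y : SSet.{0}) (A : Sub Y) (ν : Set (Y.obj V0))

/-- The index type for the transfinite composition: a well-order on `ν`, with an extra
bottom and top element. -/
abbrev Idx : Type := WithBot (WithTop ↥ν)

variable [LinearOrder ↥ν] [WellFoundedLT ↥ν] [SuccOrder (Idx Y ν)]

/-- The embedding of `ν` in the index type. -/
def eIdx (v : ↥ν) : Idx Y ν := ((v : WithTop ↥ν) : WithBot (WithTop ↥ν))

lemma eIdx_injective : Function.Injective (eIdx Y ν) := fun v w h => by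
  apply WithTop.coe_injective
  exact WithBot.coe_injective h

lemma eIdx_lt_top (v : ↥ν) : eIdx Y ν v < ⊤ :=
  WithBot.coe_lt_coe.2 (WithTop.coe_lt_top v)

/-- The initial segments of `ν` determined by the indices. -/
def μIdx (i : Idx Y ν) : Set (Y.obj V0) := {y | ∃ h : y ∈ ν, eIdx Y ν ⟨y, h⟩ < i}

lemma μIdx_mono {i j : Idx Y ν} (h : i ≤ j) : μIdx Y ν i ⊆ μIdx Y ν j :=
  fun _ ⟨hy, hlt⟩ => ⟨hy, lt_of_lt_of_le hlt h⟩

lemma μIdx_subset : ∀ i : Idx Y ν, μIdx Y ν i ⊆ ν := fun _ _ ⟨hy, _⟩ => hy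

lemma μIdx_top : ν ⊆ μIdx Y ν ⊤ := fun y hy => ⟨hy, eIdx_lt_top Y ν ⟨y, hy⟩⟩

lemma μIdx_bot {y : Y.obj V0} : y ∉ μIdx Y ν ⊥ := fun ⟨_, hlt⟩ => not_lt_bot hlt

/-- The filtration of `W_ν(Y)` giving the transfinite composition. -/
def XF (i : Idx Y ν) : Sub (sprod J Y) :=
  (widenedSub Y A ν).union (wideSub Y (μIdx Y ν i))

lemma XF_mono {i j : Idx Y ν} (h : i ≤ j) : (XF Y A ν i).Le (XF Y A ν j) :=
  fun m σ hσ => hσ.imp (fun h' => h') (fun h' => wideSub_mono Y (μIdx_mono Y ν h) m h')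

lemma XF_le (i : Idx Y ν) : (XF Y A ν i).Le (wideSub Y ν) := fun m σ hσ =>
  hσ.elim (fun h' => widenedSub_le Y A ν m h')
    (fun h' => wideSub_mono Y (μIdx_subset Y ν i) m h')

lemma le_XF_bot : (widenedSub Y A ν).Le (XF Y A ν ⊥) := fun _ _ h => Or.inl h

lemma XF_bot_le : (XF Y A ν ⊥).Le (widenedSub Y A ν) := by
  intro m σ hσ
  refine hσ.elim (fun h => h) (fun h => Or.inl ?_)
  rw [mem_wideSub_iff_const] at h
  rw [mem_zeroSlice_iff_const]
  intro k
  cases hk : σ.1 k with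
  | false => rfl
  | true => exact absurd (h k hk) (μIdx_bot Y ν)

lemma wide_le_XF_top : (wideSub Y ν).Le (XF Y A ν ⊤) := fun m σ hσ =>
  Or.inr (wideSub_mono Y (μIdx_top Y ν) m hσ)

/-- The filtration functor. -/
def FF : Idx Y ν ⥤ SSet.{0} where
  obj i := (XF Y A ν i).toSSet
  map {i j} h := Sub.homOfLe (XF_mono Y A ν (leOfHom h))
  map_id _ := rfl
  map_comp _ _ := rfl

/-- The cocone on the filtration with apex `W_ν(Y)`. -/
def cocF : Cocone (FF Y A ν) where
  pt := (wideSub Y ν).toSSet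
  ι :=
    { app := fun i => Sub.homOfLe (XF_le Y A ν i)
      naturality := fun i j h => rfl }

/-- The cocone `cocF` is a colimit. -/
def cocFIsColimit : IsColimit (cocF Y A ν) where
  desc s := Sub.homOfLe (wide_le_XF_top Y A ν) ≫ s.ι.app ⊤
  fac s j := by
    have h := s.ι.naturality (homOfLE (le_top : j ≤ ⊤))
    simp only [Functor.const_obj_map, Category.comp_id] at h
    calc (cocF Y A ν).ι.app j ≫ Sub.homOfLe (wide_le_XF_top Y A ν) ≫ s.ι.app ⊤
        = (FF Y A ν).map (homOfLE le_top) ≫ s.ι.app ⊤ := rfl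
      _ = s.ι.app j := h
  uniq s q hq := by
    have h := hq ⊤
    show q = Sub.homOfLe (wide_le_XF_top Y A ν) ≫ s.ι.app ⊤
    rw [← h]
    rfl

lemma exists_lt_mem {i : Idx Y ν} (hi : Order.IsSuccLimit i) {m : SimplexCategoryᵒᵖ}
    (σ : (sprod J Y).obj m) (hσ : σ ∈ (XF Y A ν i).carrier m) :
    ∃ j : Idx Y ν, j < i ∧ σ ∈ (XF Y A ν j).carrier m := by
  classical
  rcases hσ with h | h
  · exact ⟨⊥, hi.ne_bot.bot_lt, Or.inl h⟩
  · rw [mem_wideSub_iff_const] at h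
    refine ⟨Finset.univ.sup (fun k : Fin (m.unop.len + 1) =>
      if hk : σ.1 k = true then
        Order.succ (eIdx Y ν ⟨Y.map (SimplexCategory.const (SimplexCategory.mk 0) m.unop
          k).op σ.2, (h k hk).choose⟩)
      else ⊥), ?_, Or.inr ?_⟩
    · rw [Finset.sup_lt_iff hi.ne_bot.bot_lt]
      intro k _
      split
      · next hk => exact hi.succ_lt (h k hk).choose_spec
      · exact hi.ne_bot.bot_lt
    · rw [mem_wideSub_iff_const]
      intro k hk
      refine ⟨(h k hk).choose, lt_of_lt_of_le ?_ (Finset.le_sup (Finset.mem_univ k))⟩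
      rw [dif_pos hk]
      exact Order.lt_succ_of_not_isMax (h k hk).choose_spec.not_isMax

/-- The restriction cocones of the filtration at limit indices are colimits. -/
noncomputable def restrIsColimit (i : Idx Y ν) (hi : Order.IsSuccLimit i) :
    IsColimit (restrictionCocone (FF Y A ν) i) := by
  classical
  apply evaluationJointlyReflectsColimits
  intro m
  have compat : ∀ (s : Cocone ((iioFunctor i ⋙ FF Y A ν) ⋙
        (evaluation SimplexCategoryᵒᵖ (Type 0)).obj m))
      (j j' : Set.Iio i) (hjj : j ≤ j') (x : (sprod J Y).obj m)
      (hx : x ∈ (XF Y A ν j.1).carrier m)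
      (hx' : x ∈ (XF Y A ν j'.1).carrier m),
      s.ι.app j ⟨x, hx⟩ = s.ι.app j' ⟨x, hx'⟩ := by
    intro s j j' hjj x hx hx'
    have h2 := ConcreteCategory.congr_hom (s.ι.naturality (homOfLE hjj)) ⟨x, hx⟩
    exact h2.symm
  have hex : ∀ x : ((XF Y A ν i).toSSet).obj m,
      ∃ j : Idx Y ν, j < i ∧ x.1 ∈ (XF Y A ν j).carrier m :=
    fun x => exists_lt_mem Y A ν hi x.1 x.2
  let descfun : ∀ (s : Cocone ((iioFunctor i ⋙ FF Y A ν) ⋙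
        (evaluation SimplexCategoryᵒᵖ (Type 0)).obj m)),
      ((XF Y A ν i).toSSet).obj m → s.pt :=
    fun s x => s.ι.app ⟨(hex x).choose, (hex x).choose_spec.1⟩
      ⟨x.1, (hex x).choose_spec.2⟩
  have hdesc : ∀ (s : Cocone ((iioFunctor i ⋙ FF Y A ν) ⋙
        (evaluation SimplexCategoryᵒᵖ (Type 0)).obj m))
      (x : ((XF Y A ν i).toSSet).obj m) (j : Set.Iio i)
      (hmem : x.1 ∈ (XF Y A ν j.1).carrier m),
      descfun s x = s.ι.app j ⟨x.1, hmem⟩ := by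
    intro s x j hmem
    rcases le_total ((hex x).choose) j.1 with hle | hle
    · exact compat s ⟨(hex x).choose, (hex x).choose_spec.1⟩ j hle x.1
        (hex x).choose_spec.2 hmem
    · exact (compat s j ⟨(hex x).choose, (hex x).choose_spec.1⟩ hle x.1 hmem
        (hex x).choose_spec.2).symm
  refine { desc := fun s => TypeCat.ofHom (descfun s), fac := ?_, uniq := ?_ }
  · intro s j
    ext y
    change ((XF Y A ν j.1).toSSet).obj m at y
    change descfun s ⟨y.1, XF_mono Y A ν j.2.le m y.2⟩ = s.ι.app j y
    exact hdesc s ⟨y.1, XF_mono Y A ν j.2.le m y.2⟩ j y.2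
  · intro s q hq
    ext x
    have h3 := ConcreteCategory.congr_hom (hq ⟨(hex x).choose, (hex x).choose_spec.1⟩)
      ⟨x.1, (hex x).choose_spec.2⟩
    exact h3.trans (hdesc s x ⟨(hex x).choose, (hex x).choose_spec.1⟩
      (hex x).choose_spec.2).symm
/-- The stage `X_i` of the filtration, as a simplicial set. -/
abbrev ZF (i : Idx Y ν) : SSet.{0} := (XF Y A ν i).toSSet

/-- The vertex `(0, v)` of `X_i`. -/
def vZ (i : Idx Y ν) (v : ↥ν) : (ZF Y A ν i).obj V0 :=
  ⟨(fun _ => false, v.1), Or.inl (Or.inl (fun _ => rfl))⟩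

/-- The subcomplex `X_i ∩ (J × A)` of `X_i`. -/
def BF (i : Idx Y ν) : Sub (ZF Y A ν i) := Sub.restrict (XF Y A ν i) (Sub.prodJ A)

/-- The "or" composition map on underlying simplices: `J × (J × Y) → J × Y`. -/
def uOr (i : Idx Y ν) {m : SimplexCategoryᵒᵖ} (p : (sprod J (ZF Y A ν i)).obj m) :
    (sprod J Y).obj m :=
  (fun k => p.1 k || p.2.1.1 k, p.2.1.2)

lemma wideV_spec {i : Idx Y ν} {v : ↥ν} {m : SimplexCategoryᵒᵖ}
    {p : (sprod J (ZF Y A ν i)).obj m}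
    (hp : p ∈ (wideSub (ZF Y A ν i) {vZ Y A ν i v}).carrier m)
    {g : SimplexCategory.mk 0 ⟶ m.unop} (hg : p.1 (g.toOrderHom 0) = true) :
    p.2.1.1 (g.toOrderHom 0) = false ∧ Y.map g.op p.2.1.2 = v.1 := by
  have h : (ZF Y A ν i).map g.op p.2 = vZ Y A ν i v := hp g hg
  have h1 : ((sprod J Y).map g.op p.2.1) = ((fun _ => false : Fin 1 → Bool), v.1) :=
    congrArg Subtype.val h
  exact ⟨congrFun (congrArg Prod.fst h1) 0, congrArg Prod.snd h1⟩

lemma not_mem_μIdx {i : Idx Y ν} {v : ↥ν} (hv : eIdx Y ν v = i) : v.1 ∉ μIdx Y ν i := by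
  rintro ⟨h, hlt⟩
  have h3 : (⟨v.1, h⟩ : ↥ν) = v := Subtype.ext rfl
  rw [h3, hv] at hlt
  exact lt_irrefl i hlt

lemma mem_μIdx_succ {i : Idx Y ν} (hi : ¬IsMax i) {v : ↥ν} (hv : eIdx Y ν v = i) :
    v.1 ∈ μIdx Y ν (Order.succ i) :=
  ⟨v.2, by rw [show eIdx Y ν ⟨v.1, v.2⟩ = i from hv]; exact Order.lt_succ_of_not_isMax hi⟩

lemma mem_μIdx_succ_elim {i : Idx Y ν} (hi : ¬IsMax i) {v : ↥ν} (hv : eIdx Y ν v = i)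
    {y : Y.obj V0} (hy : y ∈ μIdx Y ν (Order.succ i)) : y ∈ μIdx Y ν i ∨ y = v.1 := by
  obtain ⟨hyν, hlt⟩ := hy
  rcases lt_or_eq_of_le ((Order.lt_succ_iff_of_not_isMax hi).mp hlt) with h | h
  · exact Or.inl ⟨hyν, h⟩
  · exact Or.inr (congrArg Subtype.val (eIdx_injective Y ν (h.trans hv.symm)))

/-- If the `Y`-component lies in `A`, the composed simplex lies in `X_i` (in fact in the
widened part). -/
lemma uOr_mem_of_A {i : Idx Y ν} {v : ↥ν} {m : SimplexCategoryᵒᵖ}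
    {p : (sprod J (ZF Y A ν i)).obj m}
    (hp : p ∈ (wideSub (ZF Y A ν i) {vZ Y A ν i v}).carrier m)
    (hA : p.2.1.2 ∈ A.carrier m) : uOr Y A ν i p ∈ (XF Y A ν i).carrier m := by
  refine Or.inl (Or.inr ⟨?_, hA⟩)
  intro g hg
  show Y.map g.op p.2.1.2 ∈ ν ∩ A.carrier V0
  rcases Bool.or_eq_true_iff.mp hg with h | h
  · have h2 := (wideV_spec Y A ν (g := g) hp h).2
    rw [h2]
    exact ⟨v.2, h2 ▸ A.map_mem g.op hA⟩
  · rcases p.2.2 with (hz | ⟨hwA, _⟩) | hw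
    · exact absurd ((hz g).symm.trans h) Bool.false_ne_true
    · exact hwA g h
    · exact ⟨μIdx_subset Y ν i (hw g h), A.map_mem g.op hA⟩

/-- The composed simplex of a simplex of `W_{v'}(X_i)` lies in `X_{i+1}`. -/
lemma uOr_mem_succ {i : Idx Y ν} (hi : ¬IsMax i) {v : ↥ν} (hv : eIdx Y ν v = i)
    {m : SimplexCategoryᵒᵖ} {p : (sprod J (ZF Y A ν i)).obj m}
    (hp : p ∈ (wideSub (ZF Y A ν i) {vZ Y A ν i v}).carrier m) :
    uOr Y A ν i p ∈ (XF Y A ν (Order.succ i)).carrier m := by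
  rcases p.2.2 with (hz | ⟨hwA, hyA⟩) | hw
  · refine Or.inr (fun g hg => ?_)
    show Y.map g.op p.2.1.2 ∈ μIdx Y ν (Order.succ i)
    rcases Bool.or_eq_true_iff.mp hg with h | h
    · rw [(wideV_spec Y A ν (g := g) hp h).2]
      exact mem_μIdx_succ Y ν hi hv
    · exact absurd ((hz g).symm.trans h) Bool.false_ne_true
  · exact XF_mono Y A ν (Order.le_succ i) m
      (uOr_mem_of_A Y A ν hp hyA)
  · refine Or.inr (fun g hg => ?_)
    show Y.map g.op p.2.1.2 ∈ μIdx Y ν (Order.succ i)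
    rcases Bool.or_eq_true_iff.mp hg with h | h
    · rw [(wideV_spec Y A ν (g := g) hp h).2]
      exact mem_μIdx_succ Y ν hi hv
    · exact μIdx_mono Y ν (Order.le_succ i) (hw g h)

/-- The composed simplex of a simplex of the widened part lies in `X_i`. -/
lemma uOr_mem_base {i : Idx Y ν} {v : ↥ν} {m : SimplexCategoryᵒᵖ}
    {p : (sprod J (ZF Y A ν i)).obj m}
    (hp : p ∈ (widenedSub (ZF Y A ν i) (BF Y A ν i) {vZ Y A ν i v}).carrier m) :
    uOr Y A ν i p ∈ (XF Y A ν i).carrier m := by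
  rcases hp with hz | ⟨hw', hB⟩
  · have hz' : ∀ k, p.1 k = false := (mem_zeroSlice_iff_const (ZF Y A ν i)).mp hz
    have he : uOr Y A ν i p = p.2.1 :=
      Prod.ext (funext fun k => by
        show (p.1 k || p.2.1.1 k) = p.2.1.1 k
        rw [hz' k, Bool.false_or]) rfl
    rw [he]
    exact p.2.2
  · exact uOr_mem_of_A Y A ν
      (wideSub_mono (ZF Y A ν i) Set.inter_subset_left m hw') hB
/-- If the composed simplex lies in `X_i`, then the original simplex lies in the widened
part (the domain of the single-vertex widening). -/
lemma mem_D_of_uOr_mem {i : Idx Y ν} {v : ↥ν} (hv : eIdx Y ν v = i)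
    {m : SimplexCategoryᵒᵖ} {p : (sprod J (ZF Y A ν i)).obj m}
    (hp : p ∈ (wideSub (ZF Y A ν i) {vZ Y A ν i v}).carrier m)
    (hXi : uOr Y A ν i p ∈ (XF Y A ν i).carrier m) :
    p ∈ (widenedSub (ZF Y A ν i) (BF Y A ν i) {vZ Y A ν i v}).carrier m := by
  rcases hXi with (hz | ⟨hwA, hyA⟩) | hw
  · -- (b ∨ a, y) lies in the zero slice, hence so does (b, τ)
    refine Or.inl (fun g => ?_)
    show p.1 (g.toOrderHom 0) = false
    cases hb : p.1 (g.toOrderHom 0) with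
    | false => rfl
    | true =>
      have h3 : ((sprod J Y).map g.op (uOr Y A ν i p)).1 0 = true := by
        show (p.1 (g.toOrderHom 0) || p.2.1.1 (g.toOrderHom 0)) = true
        rw [hb]; exact Bool.true_or _
      exact absurd (h3.symm.trans (hz g)).symm Bool.false_ne_true
  · -- the A-part
    refine Or.inr ⟨fun g hg => ⟨hp g hg, ?_⟩, hyA⟩
    exact A.map_mem g.op hyA
  · -- (b ∨ a, y) has all its 1-vertices in μ i, so b must vanish
    refine Or.inl (fun g => ?_)
    show p.1 (g.toOrderHom 0) = false
    cases hb : p.1 (g.toOrderHom 0) with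
    | false => rfl
    | true =>
      have h2 := (wideV_spec Y A ν (g := g) hp hb).2
      have h3 : ((sprod J Y).map g.op (uOr Y A ν i p)).1 0 = true := by
        show (p.1 (g.toOrderHom 0) || p.2.1.1 (g.toOrderHom 0)) = true
        rw [hb]; exact Bool.true_or _
      have h4 : Y.map g.op p.2.1.2 ∈ μIdx Y ν i := hw g h3
      rw [h2] at h4
      exact absurd h4 (not_mem_μIdx Y ν hv)

/-- Every simplex of `X_{i+1}` not in `X_i` is the composition of a simplex of
`W_{v'}(X_i)`. -/
lemma exists_uOr_preimage {i : Idx Y ν} (hi : ¬IsMax i) {v : ↥ν} (hv : eIdx Y ν v = i)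
    {m : SimplexCategoryᵒᵖ} (x : (sprod J Y).obj m)
    (hx : x ∈ (XF Y A ν (Order.succ i)).carrier m)
    (hnot : x ∉ (XF Y A ν i).carrier m) :
    ∃ p : (sprod J (ZF Y A ν i)).obj m,
      p ∈ (wideSub (ZF Y A ν i) {vZ Y A ν i v}).carrier m ∧ uOr Y A ν i p = x := by
  classical
  rcases hx with hwid | hw
  · exact absurd (Or.inl hwid) hnot
  rw [mem_wideSub_iff_const] at hw
  set c : Fin (m.unop.len + 1) → Bool := x.1 with hc
  set y : Y.obj m := x.2 with hy
  set Yk : Fin (m.unop.len + 1) → Y.obj V0 := fun k =>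
    Y.map (SimplexCategory.const (SimplexCategory.mk 0) m.unop k).op y with hYk
  set a : Fin (m.unop.len + 1) → Bool := fun k => if Yk k = v.1 then false else c k with ha
  set b : Fin (m.unop.len + 1) → Bool := fun k => if Yk k = v.1 then c k else false with hb
  have ha_mem : ((a, y) : (sprod J Y).obj m) ∈ (XF Y A ν i).carrier m := by
    refine Or.inr ((mem_wideSub_iff_const Y (μIdx Y ν i)).mpr (fun k hk => ?_))
    by_cases hYv : Yk k = v.1
    · rw [ha] at hk; simp only [if_pos hYv] at hk; exact absurd hk (by simp)
    · have hck : c k = true := by rw [ha] at hk; simpa [if_neg hYv] using hk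
      rcases mem_μIdx_succ_elim Y ν hi hv (hw k hck) with h | h
      · exact h
      · exact absurd h hYv
  set τ : (ZF Y A ν i).obj m := ⟨(a, y), ha_mem⟩ with hτ
  have hw_mem : ((b, τ) : (sprod J (ZF Y A ν i)).obj m) ∈
      (wideSub (ZF Y A ν i) {vZ Y A ν i v}).carrier m := by
    refine (mem_wideSub_iff_const (ZF Y A ν i) {vZ Y A ν i v}).mpr (fun k hk => ?_)
    by_cases hYv : Yk k = v.1
    · show (ZF Y A ν i).map (SimplexCategory.const (SimplexCategory.mk 0) m.unop k).op τ
        = vZ Y A ν i v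
      apply Subtype.ext
      refine Prod.ext (funext fun j => ?_) hYv
      show a ((SimplexCategory.const (SimplexCategory.mk 0) m.unop
        k).toOrderHom j) = false
      show a k = false
      rw [ha]; simp only [if_pos hYv]
    · rw [hb] at hk; simp only [if_neg hYv] at hk; exact absurd hk (by simp)
  refine ⟨(b, τ), hw_mem, ?_⟩
  refine Prod.ext (funext fun k => ?_) rfl
  show (b k || a k) = c k
  by_cases hYv : Yk k = v.1
  · rw [hb, ha]; simp only [if_pos hYv]; exact Bool.or_false _
  · rw [hb, ha]; simp only [if_neg hYv]; exact Bool.false_or _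

/-- Off the widened part, the composition map is injective. -/
lemma uOr_inj {i : Idx Y ν} {v : ↥ν} (hv : eIdx Y ν v = i)
    {m : SimplexCategoryᵒᵖ} {p q : (sprod J (ZF Y A ν i)).obj m}
    (hp : p ∈ (wideSub (ZF Y A ν i) {vZ Y A ν i v}).carrier m)
    (hq : q ∈ (wideSub (ZF Y A ν i) {vZ Y A ν i v}).carrier m)
    (heq : uOr Y A ν i p = uOr Y A ν i q)
    (hout : uOr Y A ν i p ∉ (XF Y A ν i).carrier m) : p = q := by
  classical
  have hyA : p.2.1.2 ∉ A.carrier m := fun hA => hout (uOr_mem_of_A Y A ν hp hA)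
  have hy0 := congrArg Prod.snd heq
  have hy : p.2.1.2 = q.2.1.2 := hy0
  have hyA' : q.2.1.2 ∉ A.carrier m := fun hA => hyA (hy ▸ hA)
  have key : ∀ (r : (sprod J (ZF Y A ν i)).obj m),
      r ∈ (wideSub (ZF Y A ν i) {vZ Y A ν i v}).carrier m →
      r.2.1.2 ∉ A.carrier m →
      ∀ k, (r.1 k = (if Y.map (SimplexCategory.const (SimplexCategory.mk 0) m.unop
          k).op r.2.1.2 = v.1 then (uOr Y A ν i r).1 k else false)) ∧
        (r.2.1.1 k = (if Y.map (SimplexCategory.const (SimplexCategory.mk 0) m.unop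
          k).op r.2.1.2 = v.1 then false else (uOr Y A ν i r).1 k)) := by
    intro r hr hrA k
    have hbv : r.1 k = true → Y.map (SimplexCategory.const (SimplexCategory.mk 0)
        m.unop k).op r.2.1.2 = v.1 :=
      fun hk => (wideV_spec Y A ν
        (g := SimplexCategory.const (SimplexCategory.mk 0) m.unop k) hr hk).2
    have hav : r.2.1.1 k = true → Y.map (SimplexCategory.const (SimplexCategory.mk 0)
        m.unop k).op r.2.1.2 ≠ v.1 := by
      intro hk
      rcases r.2.2 with (hz | ⟨_, hA⟩) | hwμ
      · exact absurd (((mem_zeroSlice_iff_const Y).mp hz k).symm.trans hk)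
          Bool.false_ne_true
      · exact absurd hA hrA
      · intro hc
        have := (mem_wideSub_iff_const Y (μIdx Y ν i)).mp hwμ k hk
        rw [hc] at this
        exact not_mem_μIdx Y ν hv this
    by_cases hYv : Y.map (SimplexCategory.const (SimplexCategory.mk 0) m.unop
        k).op r.2.1.2 = v.1
    · have hak : r.2.1.1 k = false := by
        cases hak : r.2.1.1 k with
        | false => rfl
        | true => exact absurd hYv (hav hak)
      constructor
      · rw [if_pos hYv]
        show r.1 k = (r.1 k || r.2.1.1 k)
        rw [hak, Bool.or_false]
      · rw [if_pos hYv]; exact hak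
    · have hbk : r.1 k = false := by
        cases hbk : r.1 k with
        | false => rfl
        | true => exact absurd (hbv hbk) hYv
      constructor
      · rw [if_neg hYv]; exact hbk
      · rw [if_neg hYv]
        show r.2.1.1 k = (r.1 k || r.2.1.1 k)
        rw [hbk, Bool.false_or]
  have hout' : uOr Y A ν i q ∉ (XF Y A ν i).carrier m := heq ▸ hout
  have hb : p.1 = q.1 := by
    funext k
    rw [(key p hp hyA k).1, (key q hq hyA' k).1, hy, heq]
  have ha : p.2.1.1 = q.2.1.1 := by
    funext k
    rw [(key p hp hyA k).2, (key q hq hyA' k).2, hy, heq]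
  exact Prod.ext hb (Subtype.ext (Prod.ext ha hy))
/-- The composition map `W_{v'}(X_i) ⟶ X_{i+1}`. -/
def phiHat (i : Idx Y ν) (hi : ¬IsMax i) (v : ↥ν) (hv : eIdx Y ν v = i) :
    (wideSub (ZF Y A ν i) {vZ Y A ν i v}).toSSet ⟶ (XF Y A ν (Order.succ i)).toSSet where
  app m := TypeCat.ofHom fun σ => ⟨uOr Y A ν i σ.1, uOr_mem_succ Y A ν hi hv σ.2⟩
  naturality _ _ _ := rfl

/-- The composition map `({0} × X_i) ∪ W_{v'}(X_i ∩ (J × A)) ⟶ X_i`. -/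
def psiHat (i : Idx Y ν) (v : ↥ν) :
    (widenedSub (ZF Y A ν i) (BF Y A ν i) {vZ Y A ν i v}).toSSet ⟶ (XF Y A ν i).toSSet where
  app m := TypeCat.ofHom fun σ => ⟨uOr Y A ν i σ.1, uOr_mem_base Y A ν σ.2⟩
  naturality _ _ _ := rfl

/-- Each successor step of the filtration lies in any saturated class containing
`Wide1`. -/
lemma step_mem {T : MorphismProperty SSet.{0}} (hT : IsSaturated T) (hle : Wide1 ≤ T)
    (i : Idx Y ν) (hi : ¬IsMax i) :
    T ((FF Y A ν).map (homOfLE (Order.le_succ i))) := by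
  classical
  by_cases hex : ∃ v : ↥ν, eIdx Y ν v = i
  · obtain ⟨v, hv⟩ := hex
    have w : psiHat Y A ν i v ≫ (FF Y A ν).map (homOfLE (Order.le_succ i)) =
        widenedIncl (ZF Y A ν i) (BF Y A ν i) {vZ Y A ν i v} ≫ phiHat Y A ν i hi v hv :=
      rfl
    have hcolim : IsColimit (PushoutCocone.mk _ _ w) := by
      apply evaluationJointlyReflectsColimits
      intro m
      apply ((isColimitMapCoconePushoutCoconeEquiv
        ((evaluation SimplexCategoryᵒᵖ (Type 0)).obj m) w).symm).toFun
      have hsurj : ∀ x : ((XF Y A ν (Order.succ i)).toSSet).obj m,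
          ¬(x.1 ∈ (XF Y A ν i).carrier m) →
          { p : ((wideSub (ZF Y A ν i) {vZ Y A ν i v}).toSSet).obj m //
            (phiHat Y A ν i hi v hv).app m p = x } := by
        intro x hx
        have h := exists_uOr_preimage Y A ν hi hv x.1 x.2 hx
        exact ⟨⟨h.choose, h.choose_spec.1⟩, Subtype.ext h.choose_spec.2⟩
      refine PushoutCocone.IsColimit.mk _
        (fun s => TypeCat.ofHom fun x => if hx : x.1 ∈ (XF Y A ν i).carrier m then s.inl ⟨x.1, hx⟩
          else s.inr (hsurj x hx).1)
        (fun s => ConcreteCategory.hom_ext _ _ fun c => ?_)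
        (fun s => ConcreteCategory.hom_ext _ _ fun p => ?_)
        (fun s q hql hqr => ConcreteCategory.hom_ext _ _ fun x => ?_)
      · show (if hx : c.1 ∈ (XF Y A ν i).carrier m then s.inl ⟨c.1, hx⟩
          else s.inr (hsurj _ hx).1) = s.inl c
        rw [dif_pos c.2]
        exact rfl
      · show (if hx : (((phiHat Y A ν i hi v hv).app m) p).1 ∈ (XF Y A ν i).carrier m
            then s.inl ⟨(((phiHat Y A ν i hi v hv).app m) p).1, hx⟩
            else s.inr (hsurj _ hx).1) = s.inr p
        split
        · next hx =>
            exact ConcreteCategory.congr_hom s.condition ⟨p.1, mem_D_of_uOr_mem Y A ν hv p.2 hx⟩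
        · next hx =>
            have h2 := (hsurj ((phiHat Y A ν i hi v hv).app m p) hx).2
            have heq : uOr Y A ν i (hsurj ((phiHat Y A ν i hi v hv).app m p) hx).1.1
                = uOr Y A ν i p.1 := congrArg Subtype.val h2
            have hout : uOr Y A ν i (hsurj ((phiHat Y A ν i hi v hv).app m p) hx).1.1
                ∉ (XF Y A ν i).carrier m := by rw [heq]; exact hx
            exact congrArg s.inr (Subtype.ext (uOr_inj Y A ν hv
              (hsurj ((phiHat Y A ν i hi v hv).app m p) hx).1.2 p.2 heq hout))
      · show q x = (if hx : x.1 ∈ (XF Y A ν i).carrier m then s.inl ⟨x.1, hx⟩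
          else s.inr (hsurj x hx).1)
        split
        · next hx => exact ConcreteCategory.congr_hom hql ⟨x.1, hx⟩
        · next hx =>
            exact (congrArg q (hsurj x hx).2.symm).trans (ConcreteCategory.congr_hom hqr (hsurj x hx).1)
    have sq : IsPushout (psiHat Y A ν i v)
        (widenedIncl (ZF Y A ν i) (BF Y A ν i) {vZ Y A ν i v})
        ((FF Y A ν).map (homOfLE (Order.le_succ i))) (phiHat Y A ν i hi v hv) :=
      IsPushout.of_isColimit hcolim
    exact hT.stableUnderCobaseChange.of_isPushout sq
      (hle _ ⟨ZF Y A ν i, BF Y A ν i, vZ Y A ν i v, rfl⟩)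
  · have hμ : μIdx Y ν (Order.succ i) = μIdx Y ν i := by
      refine Set.Subset.antisymm (fun y hy => ?_) (μIdx_mono Y ν (Order.le_succ i))
      obtain ⟨hyν, hlt⟩ := hy
      rcases lt_or_eq_of_le ((Order.lt_succ_iff_of_not_isMax hi).mp hlt) with h | h
      · exact ⟨hyν, h⟩
      · exact absurd ⟨⟨y, hyν⟩, h⟩ hex
    have hXeq : XF Y A ν (Order.succ i) = XF Y A ν i := by
      show (widenedSub Y A ν).union (wideSub Y (μIdx Y ν (Order.succ i)))
        = (widenedSub Y A ν).union (wideSub Y (μIdx Y ν i))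
      rw [hμ]
    have hback : (XF Y A ν (Order.succ i)).Le (XF Y A ν i) := by
      rw [hXeq]; exact Sub.Le.refl _
    exact hT.iso_mem (Iso.mk ((FF Y A ν).map (homOfLE (Order.le_succ i)))
      (Sub.homOfLe hback) rfl rfl)

end Statement10

/-- The class `Wide` of all widened inclusions is contained in the
saturated closure of the class `Wide^(1)` of inclusions widened at a single vertex. -/
theorem Wide_le_satClosure_Wide1 : Wide ≤ satClosure Wide1 := by
  intro X₀ X₁ f hf T hT hle
  obtain ⟨Y, A, ν, harr⟩ := hf
  have main : T (widenedIncl Y A ν) := by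
    obtain ⟨lo, wfi⟩ := exists_wellOrder ↥ν
    letI := lo
    letI := wfi
    letI : SuccOrder (Idx Y ν) := SuccOrder.ofLinearWellFoundedLT _
    have hcomp := hT.stableUnderTransfiniteComposition (Idx Y ν) (FF Y A ν)
      (fun i hi => step_mem Y A ν hT hle i hi)
      (fun i hi => ⟨restrIsColimit Y A ν i hi⟩)
      (cocF Y A ν) (cocFIsColimit Y A ν)
    have hiso := hT.respectsIso.toRespectsLeft.precomp
      (Q := MorphismProperty.isomorphisms SSet.{0})
      (Sub.isoOfLe (le_XF_bot Y A ν) (XF_bot_le Y A ν)).hom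
      (inferInstanceAs (IsIso _)) ((cocF Y A ν).ι.app ⊥) hcomp
    exact hiso
  have h2 : T (Arrow.mk (widenedIncl Y A ν)).hom := main
  rw [← harr] at h2
  exact h2

end Paper
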